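/- Let G be a closed subgroup of Sym(Ω) for Ω countably infinite, acting without fixed points on Ω. Suppose that for every open subgroup V ≤ G there exists a unique finite subset A ⊆ Ω with G_A ≤ V ≤ G_{A} (setwise stabilizer). Then G has no algebraicity, i.e. for every finite A ⊆ Ω, every orbit of the pointwise stabilizer G_A on Ω \ A is infinite. -/

import Mathlib

open Topology

/-- The topology of pointwise convergence on the permutation group of a (discrete) set. -/
noncomputable def permTopology (Ω : Type*) : TopologicalSpace (Equiv.Perm Ω) :=
  letI : TopologicalSpace Ω := ⊥
  TopologicalSpace.induced
    (fun g => ((g : Ω → Ω), ((g⁻¹ : Equiv.Perm Ω) : Ω → Ω))) inferInstance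

/-- The subgroup of permutations fixing every point of a finite set `A`. -/
def fixSubgroup {Ω : Type*} (A : Finset Ω) : Subgroup (Equiv.Perm Ω) where
  carrier := {g | ∀ a ∈ A, g a = a}
  one_mem' := by intro a _; simp
  mul_mem' := by
    intro g h hg hh a ha
    simp [Equiv.Perm.mul_apply, hh a ha, hg a ha]
  inv_mem' := by
    intro g hg a ha
    have h1 := hg a ha
    calc (g⁻¹ : Equiv.Perm Ω) a = g⁻¹ (g a) := by rw [h1]
    _ = a := g.symm_apply_apply a

/-- The subgroup of permutations stabilizing a finite set `A` setwise. -/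
def setwiseStab {Ω : Type*} (A : Finset Ω) : Subgroup (Equiv.Perm Ω) where
  carrier := {g | ∀ a : Ω, a ∈ A ↔ g a ∈ A}
  one_mem' := by intro a; simp
  mul_mem' := by
    intro g h hg hh a
    rw [hh a, hg (h a)]
    simp [Equiv.Perm.mul_apply]
  inv_mem' := by
    intro g hg a
    have := hg ((g⁻¹ : Equiv.Perm Ω) a)
    rw [show g ((g⁻¹ : Equiv.Perm Ω) a) = a from g.apply_symm_apply a] at this
    exact this.symm

/-- If every open subgroup of a fixed-point-free closed permutation group `G` lies between the
pointwise and the setwise stabilizer of a unique finite set, then `G` has no algebraicity. -/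
theorem no_algebraicity_of_open_subgroups_between_stabilizers
    (Ω : Type*) [Countable Ω] [Infinite Ω] (G : Subgroup (Equiv.Perm Ω))
    (hGcl : IsClosed[permTopology Ω] (G : Set (Equiv.Perm Ω)))
    (hnofix : ¬ ∃ ω : Ω, ∀ g ∈ G, g ω = ω)
    (hyp : ∀ V : Subgroup (Equiv.Perm Ω), V ≤ G →
      (∃ U : Set (Equiv.Perm Ω), IsOpen[permTopology Ω] U ∧ (V : Set (Equiv.Perm Ω)) = U ∩ G) →
      ∃! A : Finset Ω, G ⊓ fixSubgroup A ≤ V ∧ V ≤ G ⊓ setwiseStab A) :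
    ∀ (A : Finset Ω) (b : Ω), b ∉ A →
      {x : Ω | ∃ g ∈ G ⊓ fixSubgroup A, g b = x}.Infinite := by
  classical
  intro A b hb
  by_contra hfin
  rw [Set.not_infinite] at hfin
  set V : Subgroup (Equiv.Perm Ω) := G ⊓ fixSubgroup A with hV
  -- V is open in G
  have hopen : ∃ U : Set (Equiv.Perm Ω), IsOpen[permTopology Ω] U ∧
      (V : Set (Equiv.Perm Ω)) = U ∩ G := by
    refine ⟨(fixSubgroup A : Set (Equiv.Perm Ω)), ?_, ?_⟩
    · letI : TopologicalSpace Ω := ⊥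
      haveI : DiscreteTopology Ω := ⟨rfl⟩
      show IsOpen[TopologicalSpace.induced
        (fun g : Equiv.Perm Ω => ((g : Ω → Ω), ((g⁻¹ : Equiv.Perm Ω) : Ω → Ω)))
        inferInstance] _
      rw [isOpen_induced_iff]
      refine ⟨⋂ a ∈ A, {p : (Ω → Ω) × (Ω → Ω) | p.1 a = a}, ?_, ?_⟩
      · refine isOpen_biInter_finset (fun a _ => ?_)
        have : {p : (Ω → Ω) × (Ω → Ω) | p.1 a = a}
            = (fun p : (Ω → Ω) × (Ω → Ω) => p.1 a) ⁻¹' {a} := rfl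
        rw [this]
        exact IsOpen.preimage ((continuous_apply a).comp continuous_fst)
          (isOpen_discrete _)
      · ext g
        simp [fixSubgroup, Subgroup.mem_carrier]
        exact Iff.rfl
    · ext g
      constructor
      · intro hg
        exact ⟨hg.2, hg.1⟩
      · intro hg
        exact ⟨hg.2, hg.1⟩
  obtain ⟨B, _, hBuniq⟩ := hyp V inf_le_left hopen
  -- the key lemma: if g fixes A pointwise and g a ∈ A then a ∈ A
  have key : ∀ g ∈ fixSubgroup A, ∀ a : Ω, g a ∈ A → a ∈ A := by
    intro g hg a ha
    have h1 : g (g a) = g a := hg (g a) ha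
    have h2 : g a = a := g.injective h1
    rwa [h2] at ha
  -- A satisfies the property
  have hA : G ⊓ fixSubgroup A ≤ V ∧ V ≤ G ⊓ setwiseStab A := by
    refine ⟨le_refl _, fun g hg => ⟨hg.1, fun a => ?_⟩⟩
    constructor
    · intro ha
      rw [hg.2 a ha]; exact ha
    · exact key g hg.2 a
  -- the finite orbit
  let O : Finset Ω := hfin.toFinset
  have hbO : b ∈ O := by
    simp only [O, Set.Finite.mem_toFinset]
    exact ⟨1, ⟨G.one_mem, (fixSubgroup A).one_mem⟩, rfl⟩
  have hOmem : ∀ x : Ω, x ∈ O ↔ ∃ g ∈ V, g b = x := by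
    intro x; simp only [O, Set.Finite.mem_toFinset]; rfl
  -- A ∪ O satisfies the property
  have hA' : G ⊓ fixSubgroup (A ∪ O) ≤ V ∧ V ≤ G ⊓ setwiseStab (A ∪ O) := by
    constructor
    · intro g hg
      exact ⟨hg.1, fun a ha => hg.2 a (Finset.mem_union_left _ ha)⟩
    · intro g hg
      refine ⟨hg.1, fun a => ?_⟩
      constructor
      · intro ha
        rcases Finset.mem_union.1 ha with ha | ha
        · rw [hg.2 a ha]; exact Finset.mem_union_left _ ha
        · rcases (hOmem a).1 ha with ⟨h, hh, hhb⟩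
          refine Finset.mem_union_right _ ((hOmem (g a)).2 ⟨g * h, V.mul_mem hg hh, ?_⟩)
          simp [Equiv.Perm.mul_apply, hhb]
      · intro ha
        rcases Finset.mem_union.1 ha with ha | ha
        · exact Finset.mem_union_left _ (key g hg.2 a ha)
        · rcases (hOmem (g a)).1 ha with ⟨h, hh, hhb⟩
          refine Finset.mem_union_right _ ((hOmem a).2 ⟨g⁻¹ * h, V.mul_mem (V.inv_mem hg) hh, ?_⟩)
          simp [Equiv.Perm.mul_apply, hhb]
  have e1 : A = B := hBuniq A hA
  have e2 : A ∪ O = B := hBuniq (A ∪ O) hA'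
  have : b ∈ A := by
    have : b ∈ A ∪ O := Finset.mem_union_right _ hbO
    rwa [e2, ← e1] at this
  exact hb this
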